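/- arXiv:0805.0007 — 2 statements merged into one kernel-verified Lean document; each statement's English description precedes it below -/
import Mathlib

section
/- For any vector (x_1,...,x_d) ∈ ℂ^d there exist signs θ_1,...,θ_d ∈ {−1,+1} such that |∑_{k=1}^d θ_k x_k| ≥ (2/π) ∑_{k=1}^d |x_k|. -/
open Real intervalIntegral in
lemma integral_abs_cos : ∫ t in (0:ℝ)..(2*π), |Real.cos t| = 4 := by
  have h1 : ∫ t in (0:ℝ)..(π/2), |Real.cos t| = 1 := by
    rw [integral_congr (g := Real.cos)]
    · simp [integral_cos]
    · intro t ht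
      rw [Set.uIcc_of_le (by positivity)] at ht
      exact abs_of_nonneg (Real.cos_nonneg_of_mem_Icc ⟨by linarith [ht.1, pi_pos], ht.2⟩)
  have h2 : ∫ t in (π/2)..(π + π/2), |Real.cos t| = 2 := by
    rw [integral_congr (g := fun t => -Real.cos t)]
    · simp [integral_cos, Real.sin_pi_div_two]
      rw [Real.sin_add, Real.sin_pi_div_two, Real.cos_pi_div_two]
      simp; ring
    · intro t ht
      rw [Set.uIcc_of_le (by linarith [pi_pos])] at ht
      exact abs_of_nonpos (Real.cos_nonpos_of_pi_div_two_le_of_le ht.1 ht.2)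
  have h3 : ∫ t in (π + π/2)..(2*π), |Real.cos t| = 1 := by
    rw [integral_congr (g := Real.cos)]
    · rw [integral_cos]
      simp [Real.sin_two_pi]
      rw [Real.sin_add, Real.sin_pi_div_two, Real.cos_pi_div_two]
      simp
    · intro t ht
      rw [Set.uIcc_of_le (by linarith [pi_pos])] at ht
      have hc : 0 ≤ Real.cos t := by
        rw [← Real.cos_sub_two_pi t]
        refine Real.cos_nonneg_of_mem_Icc ⟨?_, ?_⟩
        · linarith [ht.1]
        · linarith [ht.2, pi_pos]
      exact abs_of_nonneg hc
  have i : IntervalIntegrable (fun t => |Real.cos t|) MeasureTheory.volume 0 (2*π)  :=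
    (Real.continuous_cos.abs).intervalIntegrable (μ := MeasureTheory.volume) _ _
  have := integral_add_adjacent_intervals (a := (0:ℝ)) (b := π/2) (c := π + π/2)
    (f := fun t => |Real.cos t|) ((Real.continuous_cos.abs).intervalIntegrable (μ := MeasureTheory.volume) _ _)
    ((Real.continuous_cos.abs).intervalIntegrable (μ := MeasureTheory.volume) _ _)
  have h4 := integral_add_adjacent_intervals (a := (0:ℝ)) (b := π + π/2) (c := 2*π)
    (f := fun t => |Real.cos t|) ((Real.continuous_cos.abs).intervalIntegrable (μ := MeasureTheory.volume) _ _)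
    ((Real.continuous_cos.abs).intervalIntegrable (μ := MeasureTheory.volume) _ _)
  rw [← h4, ← this, h1, h2, h3]; norm_num

open Real in
lemma periodic_abs_cos : Function.Periodic (fun x => |Real.cos x|) (2*π) :=
  fun x => by simp [Real.cos_add_two_pi]

open Real in
lemma integral_abs_re_exp (z : ℂ) :
    ∫ φ in (0:ℝ)..(2*π), |(Complex.exp (φ*Complex.I) * z).re| = 4 * ‖z‖ := by
  have key : ∀ φ : ℝ, (Complex.exp (φ*Complex.I) * z).re
      = ‖z‖ * Real.cos (φ + z.arg) := by
    intro φ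
    conv_lhs => rw [← Complex.norm_mul_exp_arg_mul_I z]
    rw [show Complex.exp (↑φ*Complex.I) * ((‖z‖ : ℂ) * Complex.exp (↑z.arg*Complex.I))
        = (‖z‖ : ℂ) * Complex.exp ((↑(φ + z.arg) : ℂ)*Complex.I) by
      rw [mul_left_comm, ← Complex.exp_add]; congr 2; push_cast; ring]
    rw [Complex.re_ofReal_mul, Complex.exp_ofReal_mul_I_re]
  calc ∫ φ in (0:ℝ)..(2*π), |(Complex.exp (φ*Complex.I) * z).re|
      = ∫ φ in (0:ℝ)..(2*π), ‖z‖ * |Real.cos (φ + z.arg)| := by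
        apply intervalIntegral.integral_congr
        intro φ _
        show |(Complex.exp (↑φ*Complex.I) * z).re| = ‖z‖ * |Real.cos (φ + z.arg)|
        rw [key, abs_mul, _root_.abs_of_nonneg (norm_nonneg _)]
    _ = ‖z‖ * ∫ φ in (0:ℝ)..(2*π), |Real.cos (φ + z.arg)| :=
        intervalIntegral.integral_const_mul _ _
    _ = ‖z‖ * ∫ φ in z.arg..(2*π + z.arg), |Real.cos φ| := by
        rw [intervalIntegral.integral_comp_add_right (fun t => |Real.cos t|)]
        norm_num
    _ = 4 * ‖z‖ := by
        rw [show 2*π + z.arg = z.arg + 2*π by ring,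
          periodic_abs_cos.intervalIntegral_add_eq z.arg 0]
        simp [integral_abs_cos]
        ring

open Complex

/-- For any vector `(x_1,...,x_d) ∈ ℂ^d` there exist signs `θ_k ∈ {±1}` with
`|∑ θ_k x_k| ≥ (2/π) ∑ |x_k|`. -/
theorem signs_approximate_complex_sum {d : ℕ} (x : Fin d → ℂ) :
    ∃ θ : Fin d → ℝ, (∀ k, θ k = 1 ∨ θ k = -1) ∧
      (2 / Real.pi) * ∑ k, ‖x k‖ ≤ ‖∑ k, (θ k : ℂ) * x k‖ := by
  set F : ℝ → ℝ := fun φ => ∑ k, |(Complex.exp (φ*Complex.I) * x k).re| with hF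
  have hFc : Continuous F := by
    apply continuous_finset_sum
    intro k _
    fun_prop
  have hint : ∫ φ in (0:ℝ)..(2*Real.pi), F φ = 4 * ∑ k, ‖x k‖ := by
    rw [hF, intervalIntegral.integral_finset_sum]
    · rw [Finset.mul_sum]
      exact Finset.sum_congr rfl fun k _ => integral_abs_re_exp (x k)
    · intro k _
      apply Continuous.intervalIntegrable
      fun_prop
  obtain ⟨φ0, hmem, hmax⟩ := (isCompact_Icc (a := (0:ℝ)) (b := 2*Real.pi)).exists_isMaxOn
    ⟨0, Set.mem_Icc.2 ⟨le_refl 0, by positivity⟩⟩ hFc.continuousOn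
  have hle : ∫ φ in (0:ℝ)..(2*Real.pi), F φ ≤ ∫ _ in (0:ℝ)..(2*Real.pi), F φ0 := by
    apply intervalIntegral.integral_mono_on (by positivity)
      (hFc.intervalIntegrable _ _) intervalIntegrable_const
    intro y hy
    exact hmax hy
  rw [hint, intervalIntegral.integral_const, smul_eq_mul] at hle
  have hbound : (2 / Real.pi) * ∑ k, ‖x k‖ ≤ F φ0 := by
    rw [div_mul_eq_mul_div, div_le_iff₀ Real.pi_pos]
    nlinarith [hle]
  set θ : Fin d → ℝ := fun k => if 0 ≤ (Complex.exp (φ0*Complex.I) * x k).re then (1:ℝ) else -1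
    with hθ
  refine ⟨θ, fun k => ?_, ?_⟩
  · simp only [hθ]
    split_ifs <;> simp
  have hre : (Complex.exp (φ0*Complex.I) * ∑ k, (θ k : ℂ) * x k).re = F φ0 := by
    rw [Finset.mul_sum, Complex.re_sum, hF]
    apply Finset.sum_congr rfl
    intro k _
    rw [show Complex.exp (↑φ0*Complex.I) * ((θ k : ℂ) * x k)
        = (θ k : ℂ) * (Complex.exp (↑φ0*Complex.I) * x k) by ring,
      Complex.re_ofReal_mul]
    by_cases h : 0 ≤ (Complex.exp (φ0*Complex.I) * x k).re
    · rw [_root_.abs_of_nonneg h]; simp only [hθ]; rw [if_pos h, one_mul]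
    · rw [abs_of_neg (lt_of_not_ge h)]; simp only [hθ]; rw [if_neg h]; ring
  calc (2 / Real.pi) * ∑ k, ‖x k‖ ≤ F φ0 := hbound
    _ = (Complex.exp (φ0*Complex.I) * ∑ k, (θ k : ℂ) * x k).re := hre.symm
    _ ≤ ‖Complex.exp (φ0*Complex.I) * ∑ k, (θ k : ℂ) * x k‖ := Complex.re_le_norm _
    _ = ‖∑ k, (θ k : ℂ) * x k‖ := by
        rw [norm_mul, Complex.norm_exp_ofReal_mul_I, one_mul]
end

section
/- Let |ψ⟩ be a random unit vector in a subspace V ⊆ ℂ^N with E[|⟨g|ψ⟩|²] = 1/N and E[|⟨g|ψ⟩|⁴] ≤ 2/N² for every computational basis vector |g⟩, g ∈ {1,...,N}. Then E[∑_{g=1}^N |⟨g|ψ⟩|] ≥ √N / √2, and hence there exists a unit vector |ψ⟩ ∈ V with ∑_g |⟨g|ψ⟩| ≥ √N / √2. -/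
open Matrix MeasureTheory

/-- If `ψ` is a random unit vector in a subspace `V ⊆ ℂ^N` with
`E[|⟨g|ψ⟩|²] = 1/N` and `E[|⟨g|ψ⟩|⁴] ≤ 2/N²` for every computational basis vector `g`,
then `E[∑_g |⟨g|ψ⟩|] ≥ √N/√2`, and hence some unit vector `ψ ∈ V` has
`∑_g |⟨g|ψ⟩| ≥ √N/√2`. -/
theorem l1_norm_lower_bound {N : ℕ} (hN : 0 < N) (V : Submodule ℂ (Fin N → ℂ))
    (μ : Measure (Fin N → ℂ)) [IsProbabilityMeasure μ]
    (hsupp : ∀ᵐ ψ ∂μ, ψ ∈ V ∧ star ψ ⬝ᵥ ψ = 1)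
    (hInt : Integrable (fun ψ => ∑ g, ‖ψ g‖) μ)
    (h2 : ∀ g : Fin N, ∫ ψ, (‖ψ g‖) ^ 2 ∂μ = 1 / N)
    (h4 : ∀ g : Fin N, ∫ ψ, (‖ψ g‖) ^ 4 ∂μ ≤ 2 / (N : ℝ) ^ 2) :
    Real.sqrt N / Real.sqrt 2 ≤ ∫ ψ, ∑ g, ‖ψ g‖ ∂μ ∧
      ∃ ψ ∈ V, star ψ ⬝ᵥ ψ = 1 ∧
        Real.sqrt N / Real.sqrt 2 ≤ ∑ g, ‖ψ g‖ := by
  have hNR : (0:ℝ) < N := by exact_mod_cast hN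
  have hsN : (0:ℝ) < Real.sqrt N := Real.sqrt_pos.mpr hNR
  have hs2 : (0:ℝ) < Real.sqrt 2 := Real.sqrt_pos.mpr (by norm_num)
  have hsNsq : Real.sqrt N * Real.sqrt N = N := Real.mul_self_sqrt hNR.le
  -- a.e. bound: each coordinate has abs ≤ 1
  have hbd : ∀ᵐ ψ ∂μ, ∀ g : Fin N, ‖ψ g‖ ≤ 1 := by
    filter_upwards [hsupp] with ψ hψ g
    obtain ⟨-, h1⟩ := hψ
    have hsum : (∑ i, (‖ψ i‖)^2 : ℝ) = 1 := by
      have h1' : star ψ ⬝ᵥ ψ = ((∑ i, (‖ψ i‖)^2 : ℝ) : ℂ) := by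
        simp [dotProduct, Pi.star_apply, Complex.sq_norm, Complex.normSq_eq_conj_mul_self]
      rw [h1'] at h1
      exact_mod_cast h1
    have hle : (‖ψ g‖)^2 ≤ 1 := by
      rw [← hsum]
      exact Finset.single_le_sum (f := fun i => (‖ψ i‖)^2)
        (fun i _ => sq_nonneg _) (Finset.mem_univ g)
    nlinarith [norm_nonneg (ψ g)]
  have hmeas : ∀ g : Fin N, Measurable fun ψ : Fin N → ℂ => ‖ψ g‖ :=
    fun g => continuous_norm.measurable.comp (measurable_pi_apply g)
  -- integrability of each coordinate
  have hIntY : ∀ g : Fin N, Integrable (fun ψ => ‖ψ g‖) μ := by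
    intro g
    refine Integrable.mono' (integrable_const 1) (hmeas g).aestronglyMeasurable ?_
    filter_upwards [hbd] with ψ h
    rw [Real.norm_of_nonneg (norm_nonneg _)]; exact h g
  -- per coordinate lower bound on E|Y|
  have key : ∀ g : Fin N, 1 / (Real.sqrt 2 * Real.sqrt N) ≤ ∫ ψ, ‖ψ g‖ ∂μ := by
    intro g
    set Y : (Fin N → ℂ) → ℝ := fun ψ => ‖ψ g‖ with hY
    have hYm : Measurable Y := hmeas g
    have hY0 : ∀ ψ, 0 ≤ Y ψ := fun ψ => norm_nonneg _
    have hY1 : ∀ᵐ ψ ∂μ, Y ψ ≤ 1 := by filter_upwards [hbd] with ψ h; exact h g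
    have hconj : Real.HolderConjugate (3/2) 3 := ⟨by norm_num, by norm_num, by norm_num⟩
    have hmemf : MeasureTheory.MemLp (fun ψ => Y ψ ^ ((2:ℝ)/3)) (ENNReal.ofReal (3/2)) μ := by
      refine MemLp.of_bound ((Real.continuous_rpow_const (by norm_num)).measurable.comp
        hYm).aestronglyMeasurable 1 ?_
      filter_upwards [hY1] with ψ h
      rw [Real.norm_of_nonneg (Real.rpow_nonneg (hY0 ψ) _)]
      exact Real.rpow_le_one (hY0 ψ) h (by norm_num)
    have hmemg : MeasureTheory.MemLp (fun ψ => Y ψ ^ ((4:ℝ)/3)) (ENNReal.ofReal 3) μ := by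
      refine MemLp.of_bound ((Real.continuous_rpow_const (by norm_num)).measurable.comp
        hYm).aestronglyMeasurable 1 ?_
      filter_upwards [hY1] with ψ h
      rw [Real.norm_of_nonneg (Real.rpow_nonneg (hY0 ψ) _)]
      exact Real.rpow_le_one (hY0 ψ) h (by norm_num)
    have hH := MeasureTheory.integral_mul_le_Lp_mul_Lq_of_nonneg hconj
      (Filter.Eventually.of_forall (fun ψ => Real.rpow_nonneg (hY0 ψ) _))
      (Filter.Eventually.of_forall (fun ψ => Real.rpow_nonneg (hY0 ψ) _)) hmemf hmemg
    have e1 : ∫ ψ, (Y ψ ^ ((2:ℝ)/3)) * (Y ψ ^ ((4:ℝ)/3)) ∂μ = 1 / N := by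
      rw [← h2 g]
      refine integral_congr_ae (Filter.Eventually.of_forall fun ψ => ?_)
      show Y ψ ^ ((2:ℝ)/3) * Y ψ ^ ((4:ℝ)/3) = ‖ψ g‖ ^ 2
      rw [← Real.rpow_add' (hY0 ψ) (by norm_num),
        show ((2:ℝ)/3 + 4/3) = ((2:ℕ):ℝ) by norm_num, Real.rpow_natCast]
    have e2 : ∫ ψ, (Y ψ ^ ((2:ℝ)/3)) ^ ((3:ℝ)/2) ∂μ = ∫ ψ, Y ψ ∂μ := by
      refine integral_congr_ae (Filter.Eventually.of_forall fun ψ => ?_)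
      show (Y ψ ^ ((2:ℝ)/3)) ^ ((3:ℝ)/2) = Y ψ
      rw [← Real.rpow_mul (hY0 ψ), show ((2:ℝ)/3 * (3/2)) = 1 by norm_num, Real.rpow_one]
    have e3 : ∫ ψ, (Y ψ ^ ((4:ℝ)/3)) ^ ((3:ℝ)) ∂μ = ∫ ψ, Y ψ ^ 4 ∂μ := by
      refine integral_congr_ae (Filter.Eventually.of_forall fun ψ => ?_)
      show (Y ψ ^ ((4:ℝ)/3)) ^ ((3:ℝ)) = Y ψ ^ 4
      rw [← Real.rpow_mul (hY0 ψ), show ((4:ℝ)/3 * 3) = ((4:ℕ):ℝ) by norm_num,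
        Real.rpow_natCast]
    rw [e1, e2, e3] at hH
    set a := ∫ ψ, Y ψ ∂μ with ha
    set c := ∫ ψ, Y ψ ^ 4 ∂μ with hc
    have ha0 : 0 ≤ a := integral_nonneg fun ψ => hY0 ψ
    have hc0 : 0 ≤ c := integral_nonneg fun ψ => by positivity
    have hc2 : c ≤ 2 / (N:ℝ)^2 := h4 g
    -- raise to 3/2
    have step : ((1:ℝ)/N) ^ ((3:ℝ)/2) ≤ a * c ^ ((1:ℝ)/2) := by
      calc ((1:ℝ)/N) ^ ((3:ℝ)/2)
          ≤ (a ^ (1/(3/2:ℝ)) * c ^ ((1:ℝ)/3)) ^ ((3:ℝ)/2) := by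
            apply Real.rpow_le_rpow (by positivity) hH (by norm_num)
        _ = a * c ^ ((1:ℝ)/2) := by
            rw [Real.mul_rpow (by positivity) (by positivity),
              ← Real.rpow_mul ha0, ← Real.rpow_mul hc0]
            norm_num
    have hcs : c ^ ((1:ℝ)/2) ≤ Real.sqrt 2 / N := by
      rw [← Real.sqrt_eq_rpow]
      calc Real.sqrt c ≤ Real.sqrt (2 / (N:ℝ)^2) := Real.sqrt_le_sqrt hc2
        _ = Real.sqrt 2 / N := by
            rw [Real.sqrt_div (by norm_num : (0:ℝ) ≤ 2), Real.sqrt_sq hNR.le]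
    have hpow : ((1:ℝ)/N) ^ ((3:ℝ)/2) = (1/N) * (1/Real.sqrt N) := by
      rw [show ((3:ℝ)/2) = 1 + 1/2 by norm_num, Real.rpow_add (by positivity), Real.rpow_one,
        ← Real.sqrt_eq_rpow, one_div (N:ℝ), Real.sqrt_inv, ← one_div, ← one_div]
    have h' : (1/(N:ℝ)) * (1/Real.sqrt N) ≤ a * (Real.sqrt 2 / N) := by
      rw [← hpow]
      exact le_trans step (mul_le_mul_of_nonneg_left hcs ha0)
    rw [div_le_iff₀ (mul_pos hs2 hsN)]
    have hmul := mul_le_mul_of_nonneg_right h' (le_of_lt (mul_pos hNR hsN))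
    calc (1:ℝ) = (1/(N:ℝ))*(1/Real.sqrt N)*((N:ℝ)*Real.sqrt N) := by field_simp
      _ ≤ a * (Real.sqrt 2 / N) * ((N:ℝ)*Real.sqrt N) := hmul
      _ = a * (Real.sqrt 2 * Real.sqrt N) := by field_simp
  -- summing
  have hsum : ∫ ψ, ∑ g, ‖ψ g‖ ∂μ = ∑ g, ∫ ψ, ‖ψ g‖ ∂μ :=
    integral_finset_sum _ fun g _ => hIntY g
  have part1 : Real.sqrt N / Real.sqrt 2 ≤ ∫ ψ, ∑ g, ‖ψ g‖ ∂μ := by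
    rw [hsum]
    calc Real.sqrt N / Real.sqrt 2 = N * (1 / (Real.sqrt 2 * Real.sqrt N)) := by
          field_simp
          nlinarith [hsNsq]
      _ ≤ ∑ g : Fin N, ∫ ψ, ‖ψ g‖ ∂μ := by
          have := Finset.sum_le_sum (fun g (_ : g ∈ Finset.univ) => key g)
          simpa [Finset.sum_const, Finset.card_univ, mul_comm] using this
  refine ⟨part1, ?_⟩
  have hnull : μ {ψ | ¬(ψ ∈ V ∧ star ψ ⬝ᵥ ψ = 1)} = 0 := by
    exact ae_iff.mp hsupp
  obtain ⟨ψ, hψ, hle⟩ := exists_notMem_null_integral_le hInt hnull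
  simp only [Set.mem_setOf_eq, not_not] at hψ
  exact ⟨ψ, hψ.1, hψ.2, le_trans part1 hle⟩
end
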